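/- Combining the two concentration bounds: with h bounded by ‖h(x)‖² ≤ B and γ bounded by 0 ≤ γ(x) ≤ B, and with independent size-n i.i.d. samples D̃₁ ∼ P₁, D̃₂ ∼ P₂, the empirical quantity D̂ = ‖h̄(D̃₁)−h̄(D̃₂)‖² + γ̄(D̃₁) + γ̄(D̃₂) satisfies Pr(|D̂ − D(P₁,P₂)| > ε) ≤ c₁ exp(−c₂ n ε² / B²) for universal constants c₁, c₂ > 0, where D(P₁,P₂) = ‖E_{P₁}h − E_{P₂}h‖² + E_{P₁}γ + E_{P₂}γ. -/

import Mathlib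

open MeasureTheory ProbabilityTheory Real RealInnerProductSpace

lemma chord_exp (t x A : ℝ) (hA : 0 < A) (hx : |x| ≤ A) :
    exp (t * x) ≤ cosh (t * A) + (x / A) * sinh (t * A) := by
  obtain ⟨hx1, hx2⟩ := abs_le.mp hx
  have ha : (0:ℝ) ≤ (A - x) / (2 * A) := div_nonneg (by linarith) (by linarith)
  have hb : (0:ℝ) ≤ (A + x) / (2 * A) := div_nonneg (by linarith) (by linarith)
  have hA' : A ≠ 0 := ne_of_gt hA
  have hab : (A - x) / (2 * A) + (A + x) / (2 * A) = 1 := by field_simp; ring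
  have key := convexOn_exp.2 (Set.mem_univ (-(t * A))) (Set.mem_univ (t * A)) ha hb hab
  have harg : ((A - x) / (2 * A)) • -(t * A) + ((A + x) / (2 * A)) • (t * A) = t * x := by
    rw [smul_eq_mul, smul_eq_mul]; field_simp; ring
  rw [harg] at key
  calc exp (t * x) ≤ (A - x) / (2 * A) * exp (-(t * A)) + (A + x) / (2 * A) * exp (t * A) := by
        simpa [smul_eq_mul] using key
    _ = cosh (t * A) + (x / A) * sinh (t * A) := by
        rw [Real.cosh_eq, Real.sinh_eq]; field_simp; ring

open scoped Classical in
noncomputable def wfun {E : Type*} [NormedAddCommGroup E] [InnerProductSpace ℝ E]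
    (L M : ℝ) (s : E) : E :=
  if s = 0 then 0 else
    (exp (L * M ^ 2) * exp (L * ‖s‖ ^ 2) * sinh (2 * L * M * ‖s‖) / (M * ‖s‖)) • s

lemma key_pointwise {E : Type*} [NormedAddCommGroup E] [InnerProductSpace ℝ E]
    (L M : ℝ) (hL : 0 ≤ L) (hM : 0 < M) (s z : E) (hz : ‖z‖ ≤ M) :
    exp (L * ‖s + z‖ ^ 2)
      ≤ exp (L * M ^ 2) * exp ((L + 2 * L ^ 2 * M ^ 2) * ‖s‖ ^ 2) + ⟪wfun L M s, z⟫ := by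
  classical
  have hnorm : ‖s + z‖ ^ 2 = ‖s‖ ^ 2 + 2 * ⟪s, z⟫ + ‖z‖ ^ 2 := norm_add_sq_real s z
  have hz2 : ‖z‖ ^ 2 ≤ M ^ 2 := by
    have := norm_nonneg z; nlinarith
  have h1 : exp (L * ‖s + z‖ ^ 2) ≤ exp (L * ‖s‖ ^ 2 + L * M ^ 2) * exp (2 * L * ⟪s, z⟫) := by
    rw [← Real.exp_add, Real.exp_le_exp, hnorm]
    nlinarith [mul_le_mul_of_nonneg_left hz2 hL]
  by_cases hs : s = 0
  · rw [hs]
    rw [show wfun L M (0:E) = 0 from if_pos rfl]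
    simp only [inner_zero_left, add_zero, norm_zero, zero_add]
    calc exp (L * ‖z‖ ^ 2) ≤ exp (L * M ^ 2) := by
          rw [Real.exp_le_exp]; exact mul_le_mul_of_nonneg_left hz2 hL
      _ ≤ exp (L * M ^ 2) * exp ((L + 2 * L ^ 2 * M ^ 2) * (0:ℝ) ^ 2) := by
          simp
  · have hsn : 0 < ‖s‖ := norm_pos_iff.mpr hs
    have hA : 0 < M * ‖s‖ := by positivity
    have hxA : |⟪s, z⟫| ≤ M * ‖s‖ := by
      calc |⟪s, z⟫| ≤ ‖s‖ * ‖z‖ := abs_real_inner_le_norm s z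
        _ ≤ M * ‖s‖ := by nlinarith [norm_nonneg s]
    have h2 := chord_exp (2 * L) ⟪s, z⟫ (M * ‖s‖) hA hxA
    have h3 : cosh (2 * L * (M * ‖s‖)) ≤ exp (2 * L ^ 2 * M ^ 2 * ‖s‖ ^ 2) := by
      calc cosh (2 * L * (M * ‖s‖)) ≤ exp ((2 * L * (M * ‖s‖)) ^ 2 / 2) :=
            Real.cosh_le_exp_half_sq _
        _ = exp (2 * L ^ 2 * M ^ 2 * ‖s‖ ^ 2) := by ring_nf
    have hC : (0:ℝ) < exp (L * ‖s‖ ^ 2 + L * M ^ 2) := Real.exp_pos _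
    have h4 : exp (2 * L * ⟪s, z⟫)
        ≤ exp (2 * L ^ 2 * M ^ 2 * ‖s‖ ^ 2) + (⟪s, z⟫ / (M * ‖s‖)) * sinh (2 * L * (M * ‖s‖)) := by
      calc exp (2 * L * ⟪s, z⟫)
          ≤ cosh (2 * L * (M * ‖s‖)) + (⟪s, z⟫ / (M * ‖s‖)) * sinh (2 * L * (M * ‖s‖)) := h2
        _ ≤ _ := by linarith
    have hw : ⟪wfun L M s, z⟫
        = exp (L * ‖s‖ ^ 2 + L * M ^ 2) * ((⟪s, z⟫ / (M * ‖s‖)) * sinh (2 * L * (M * ‖s‖))) := by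
      rw [show wfun L M s
          = (exp (L * M ^ 2) * exp (L * ‖s‖ ^ 2) * sinh (2 * L * M * ‖s‖) / (M * ‖s‖)) • s
          from if_neg hs]
      rw [real_inner_smul_left, Real.exp_add]
      rw [show 2 * L * M * ‖s‖ = 2 * L * (M * ‖s‖) from by ring]
      field_simp
    calc exp (L * ‖s + z‖ ^ 2) ≤ exp (L * ‖s‖ ^ 2 + L * M ^ 2) * exp (2 * L * ⟪s, z⟫) := h1
      _ ≤ exp (L * ‖s‖ ^ 2 + L * M ^ 2) * (exp (2 * L ^ 2 * M ^ 2 * ‖s‖ ^ 2)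
            + (⟪s, z⟫ / (M * ‖s‖)) * sinh (2 * L * (M * ‖s‖))) :=
          mul_le_mul_of_nonneg_left h4 hC.le
      _ = exp (L * ‖s‖ ^ 2 + L * M ^ 2) * exp (2 * L ^ 2 * M ^ 2 * ‖s‖ ^ 2) + ⟪wfun L M s, z⟫ := by
          rw [hw]; ring
      _ = exp (L * M ^ 2) * exp ((L + 2 * L ^ 2 * M ^ 2) * ‖s‖ ^ 2) + ⟪wfun L M s, z⟫ := by
          rw [← Real.exp_add, ← Real.exp_add,
            show L * ‖s‖ ^ 2 + L * M ^ 2 + 2 * L ^ 2 * M ^ 2 * ‖s‖ ^ 2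
              = L * M ^ 2 + (L + 2 * L ^ 2 * M ^ 2) * ‖s‖ ^ 2 from by ring]

lemma wfun_norm_le {E : Type*} [NormedAddCommGroup E] [InnerProductSpace ℝ E]
    (L M D : ℝ) (hL : 0 ≤ L) (hM : 0 < M) (hD : 0 ≤ D) (s : E) (hs : ‖s‖ ≤ D) :
    ‖wfun L M s‖ ≤ exp (L * M ^ 2) * exp (L * D ^ 2) * sinh (2 * L * M * D) / M := by
  classical
  by_cases h : s = 0
  · rw [show wfun L M s = 0 from by rw [wfun, if_pos h], norm_zero]
    have : 0 ≤ sinh (2 * L * M * D) := by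
      rw [← Real.sinh_zero]
      exact Real.sinh_le_sinh.mpr (by positivity)
    positivity
  · have hsn : 0 < ‖s‖ := norm_pos_iff.mpr h
    rw [show wfun L M s
        = (exp (L * M ^ 2) * exp (L * ‖s‖ ^ 2) * sinh (2 * L * M * ‖s‖) / (M * ‖s‖)) • s
        from by rw [wfun, if_neg h]]
    rw [norm_smul, Real.norm_eq_abs]
    have hsh : 0 ≤ sinh (2 * L * M * ‖s‖) := by
      rw [← Real.sinh_zero]; exact Real.sinh_le_sinh.mpr (by positivity)
    have hnum : 0 ≤ exp (L * M ^ 2) * exp (L * ‖s‖ ^ 2) * sinh (2 * L * M * ‖s‖) / (M * ‖s‖) := by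
      positivity
    rw [abs_of_nonneg hnum]
    rw [div_mul_eq_mul_div, mul_comm M ‖s‖, ← div_div, mul_div_assoc, div_self hsn.ne', mul_one]
    gcongr
    all_goals first
      | exact Real.exp_le_exp.mpr (by nlinarith)
      | exact Real.sinh_le_sinh.mpr (mul_le_mul_of_nonneg_left hs (by positivity))
      | nlinarith [norm_nonneg s]

section Aux
variable {Ω : Type*} [MeasureSpace Ω] [IsProbabilityMeasure (ℙ : Measure Ω)]

lemma integrable_of_bound {E : Type*} [NormedAddCommGroup E] {f : Ω → E}
    (hm : AEStronglyMeasurable f ℙ) (C : ℝ) (hb : ∀ ω, ‖f ω‖ ≤ C) :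
    Integrable f ℙ :=
  (integrable_const C).mono' hm (Filter.Eventually.of_forall hb)

end Aux

variable {E : Type*} [NormedAddCommGroup E] [InnerProductSpace ℝ E]
  [FiniteDimensional ℝ E] [MeasurableSpace E] [BorelSpace E]

lemma wfun_measurable (L M : ℝ) : Measurable (wfun (E := E) L M) := by
  classical
  have h0 : MeasurableSet {s : E | s = 0} := by
    simpa using (isClosed_singleton (x := (0:E))).measurableSet
  unfold wfun
  refine Measurable.ite h0 measurable_const ?_
  apply Measurable.smul
  · apply Measurable.div
    · exact (measurable_const.mul
        ((measurable_norm.pow_const 2).const_mul L).exp).mul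
        ((measurable_norm.const_mul (2 * L * M)).sinh)
    · exact measurable_norm.const_mul M
  · exact measurable_id

variable {Ω : Type*} [MeasureSpace Ω] [IsProbabilityMeasure (ℙ : Measure Ω)]

lemma step_lemma (L M D : ℝ) (hL : 0 ≤ L) (hM : 0 < M) (hD : 0 ≤ D)
    {U V : Ω → E} (hUm : Measurable U) (hVm : Measurable V)
    (hUV : IndepFun U V ℙ) (hUb : ∀ ω, ‖U ω‖ ≤ D) (hVb : ∀ ω, ‖V ω‖ ≤ M)
    (hV0 : ∫ ω, V ω = 0) :
    ∫ ω, exp (L * ‖U ω + V ω‖ ^ 2)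
      ≤ exp (L * M ^ 2) * ∫ ω, exp ((L + 2 * L ^ 2 * M ^ 2) * ‖U ω‖ ^ 2) := by
  classical
  set L' : ℝ := L + 2 * L ^ 2 * M ^ 2 with hL'def
  have hL' : 0 ≤ L' := by positivity
  set W : ℝ := exp (L * M ^ 2) * exp (L * D ^ 2) * sinh (2 * L * M * D) / M with hWdef
  -- pointwise inequality
  have hpt : ∀ ω, exp (L * ‖U ω + V ω‖ ^ 2)
      ≤ exp (L * M ^ 2) * exp (L' * ‖U ω‖ ^ 2) + ⟪wfun L M (U ω), V ω⟫ :=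
    fun ω => key_pointwise L M hL hM (U ω) (V ω) (hVb ω)
  -- integrabilities
  have hUVnorm : ∀ ω, ‖U ω + V ω‖ ^ 2 ≤ (D + M) ^ 2 := by
    intro ω
    have h1 : ‖U ω + V ω‖ ≤ D + M := (norm_add_le _ _).trans (add_le_add (hUb ω) (hVb ω))
    have := norm_nonneg (U ω + V ω); nlinarith
  have hint1 : Integrable (fun ω => exp (L * ‖U ω + V ω‖ ^ 2)) ℙ := by
    refine integrable_of_bound ?_ (exp (L * (D + M) ^ 2)) ?_
    · exact (((hUm.add hVm).norm.pow_const 2).const_mul L).exp.aestronglyMeasurable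
    · intro ω
      rw [Real.norm_eq_abs, abs_of_pos (Real.exp_pos _)]
      exact Real.exp_le_exp.mpr (mul_le_mul_of_nonneg_left (hUVnorm ω) hL)
  have hint2 : Integrable (fun ω => exp (L' * ‖U ω‖ ^ 2)) ℙ := by
    refine integrable_of_bound ?_ (exp (L' * D ^ 2)) ?_
    · exact ((hUm.norm.pow_const 2).const_mul L').exp.aestronglyMeasurable
    · intro ω
      rw [Real.norm_eq_abs, abs_of_pos (Real.exp_pos _)]
      refine Real.exp_le_exp.mpr (mul_le_mul_of_nonneg_left ?_ hL')
      have := norm_nonneg (U ω); nlinarith [hUb ω]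
  have hwU : ∀ ω, ‖wfun L M (U ω)‖ ≤ W :=
    fun ω => wfun_norm_le L M D hL hM hD (U ω) (hUb ω)
  have hint3 : Integrable (fun ω => ⟪wfun L M (U ω), V ω⟫) ℙ := by
    refine integrable_of_bound ?_ (W * M) ?_
    · exact (((wfun_measurable L M).comp hUm).inner hVm).aestronglyMeasurable
    · intro ω
      rw [Real.norm_eq_abs]
      calc |⟪wfun L M (U ω), V ω⟫| ≤ ‖wfun L M (U ω)‖ * ‖V ω‖ := abs_real_inner_le_norm _ _
        _ ≤ W * M := by
            have h1 := hwU ω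
            have h2 := hVb ω
            have h3 := norm_nonneg (wfun L M (U ω))
            have h4 := norm_nonneg (V ω)
            nlinarith
  -- the inner-product term integrates to zero
  have hVint : Integrable V ℙ := integrable_of_bound hVm.aestronglyMeasurable M hVb
  have hzero : ∫ ω, ⟪wfun L M (U ω), V ω⟫ = 0 := by
    obtain b := stdOrthonormalBasis ℝ E
    have hrw : ∀ ω, ⟪wfun L M (U ω), V ω⟫
        = ∑ j, ⟪wfun L M (U ω), b j⟫ * ⟪b j, V ω⟫ :=
      fun ω => (b.sum_inner_mul_inner _ _).symm
    rw [funext hrw]  -- careful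
    rw [integral_finset_sum]
    · apply Finset.sum_eq_zero
      intro j _
      have hind : IndepFun (fun ω => ⟪wfun L M (U ω), b j⟫) (fun ω => ⟪b j, V ω⟫) ℙ := by
        have hφ : Measurable (fun s : E => ⟪wfun L M s, b j⟫) :=
          (wfun_measurable L M).inner measurable_const
        have hψ : Measurable (fun v : E => ⟪b j, v⟫) := measurable_const.inner measurable_id
        exact hUV.comp hφ hψ
      have hI1 : Integrable (fun ω => ⟪wfun L M (U ω), b j⟫) ℙ := by
        refine integrable_of_bound ?_ (W * ‖b j‖) ?_
        · exact (((wfun_measurable L M).comp hUm).inner measurable_const).aestronglyMeasurable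
        · intro ω
          rw [Real.norm_eq_abs]
          calc |⟪wfun L M (U ω), b j⟫| ≤ ‖wfun L M (U ω)‖ * ‖b j‖ := abs_real_inner_le_norm _ _
            _ ≤ W * ‖b j‖ := by
                have := hwU ω; have := norm_nonneg (b j); nlinarith [norm_nonneg (wfun L M (U ω))]
      have hI2 : Integrable (fun ω => ⟪b j, V ω⟫) ℙ := by
        refine integrable_of_bound ?_ (‖b j‖ * M) ?_
        · exact (measurable_const.inner hVm).aestronglyMeasurable
        · intro ω
          rw [Real.norm_eq_abs]
          calc |⟪b j, V ω⟫| ≤ ‖b j‖ * ‖V ω‖ := abs_real_inner_le_norm _ _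
            _ ≤ ‖b j‖ * M := by
                have := hVb ω; have := norm_nonneg (b j); nlinarith [norm_nonneg (V ω)]
      have heq : ∫ ω, ⟪wfun L M (U ω), b j⟫ * ⟪b j, V ω⟫
          = (∫ ω, ⟪wfun L M (U ω), b j⟫) * ∫ ω, ⟪b j, V ω⟫ :=
        hind.integral_mul_eq_mul_integral hI1.aestronglyMeasurable hI2.aestronglyMeasurable
      rw [heq]
      have : ∫ ω, ⟪b j, V ω⟫ = ⟪b j, ∫ ω, V ω⟫ := integral_inner hVint (b j)
      rw [this, hV0, inner_zero_right, mul_zero]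
    · intro j _
      refine integrable_of_bound ?_ ((W * ‖b j‖) * (‖b j‖ * M)) ?_
      · exact ((((wfun_measurable L M).comp hUm).inner measurable_const).mul
          (measurable_const.inner hVm)).aestronglyMeasurable
      · intro ω
        rw [Real.norm_eq_abs, abs_mul]
        calc |⟪wfun L M (U ω), b j⟫| * |⟪b j, V ω⟫|
            ≤ (‖wfun L M (U ω)‖ * ‖b j‖) * (‖b j‖ * ‖V ω‖) := by
              exact mul_le_mul (abs_real_inner_le_norm _ _) (abs_real_inner_le_norm _ _)
                (abs_nonneg _) (by positivity)
          _ ≤ (W * ‖b j‖) * (‖b j‖ * M) := by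
              have h1 := hwU ω; have h2 := hVb ω
              have hW0 : (0:ℝ) ≤ W := le_trans (norm_nonneg _) h1
              have key : ‖wfun L M (U ω)‖ * ‖V ω‖ ≤ W * M :=
                mul_le_mul h1 h2 (norm_nonneg _) hW0
              calc ‖wfun L M (U ω)‖ * ‖b j‖ * (‖b j‖ * ‖V ω‖)
                  = (‖wfun L M (U ω)‖ * ‖V ω‖) * (‖b j‖ * ‖b j‖) := by ring
                _ ≤ (W * M) * (‖b j‖ * ‖b j‖) :=
                    mul_le_mul_of_nonneg_right key (by positivity)
                _ = (W * ‖b j‖) * (‖b j‖ * M) := by ring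
  -- combine
  calc ∫ ω, exp (L * ‖U ω + V ω‖ ^ 2)
      ≤ ∫ ω, (exp (L * M ^ 2) * exp (L' * ‖U ω‖ ^ 2) + ⟪wfun L M (U ω), V ω⟫) := by
        exact integral_mono hint1 ((hint2.const_mul _).add hint3) hpt
    _ = exp (L * M ^ 2) * ∫ ω, exp (L' * ‖U ω‖ ^ 2) := by
        rw [integral_add (hint2.const_mul _) hint3, hzero, add_zero, integral_const_mul]
variable {ι : Type*} [Fintype ι] [DecidableEq ι]

lemma core_mgf (Z : ι → Ω → E) (M : ℝ) (hM : 0 < M)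
    (hind : iIndepFun Z ℙ)
    (hm : ∀ i, Measurable (Z i)) (hb : ∀ i ω, ‖Z i ω‖ ≤ M)
    (h0 : ∀ i, ∫ ω, Z i ω = 0) (s : Finset ι) :
    ∀ L : ℝ, 0 ≤ L → L * (2 * M ^ 2 * ((Fintype.card ι : ℝ) + s.card)) ≤ 1 →
    ∫ ω, exp (L * ‖∑ i ∈ s, Z i ω‖ ^ 2) ≤ exp (2 * L * s.card * M ^ 2) := by
  induction s using Finset.induction_on with
  | empty =>
      intro L hL hL1
      simp
  | insert a s ha ih =>
      intro L hL hL1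
      have hcard : (((insert a s).card : ℕ) : ℝ) = (s.card : ℝ) + 1 := by
        rw [Finset.card_insert_of_notMem ha]; push_cast; ring
      set n : ℝ := (Fintype.card ι : ℝ) with hn
      set c : ℝ := (s.card : ℝ) with hc
      have hc0 : 0 ≤ c := by positivity
      have hcle : c + 1 ≤ n := by
        have h := Finset.card_le_univ (insert a s)
        have h2 : ((insert a s).card : ℝ) ≤ n := by rw [hn]; exact_mod_cast h
        rw [hcard] at h2; linarith
      rw [hcard] at hL1
      set a2 : ℝ := 2 * L * M ^ 2 with ha2
      have ha2nn : 0 ≤ a2 := by positivity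
      have hq : a2 * (n + c + 1) ≤ 1 := by
        have he : a2 * (n + c + 1) = L * (2 * M ^ 2 * (n + (c + 1))) := by rw [ha2]; ring
        rw [he]; exact hL1
      set L' : ℝ := L + 2 * L ^ 2 * M ^ 2 with hL'
      have hL'nn : 0 ≤ L' := by positivity
      have harith1 : L' * (2 * M ^ 2 * (n + c)) ≤ 1 := by
        have he : L' * (2 * M ^ 2 * (n + c)) = a2 * (n + c) + a2 ^ 2 * (n + c) := by
          rw [hL', ha2]; ring
        rw [he]
        have h2 : a2 ^ 2 * (n + c + 1) ≤ a2 := by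
          calc a2 ^ 2 * (n + c + 1) = a2 * (a2 * (n + c + 1)) := by ring
            _ ≤ a2 * 1 := mul_le_mul_of_nonneg_left hq ha2nn
            _ = a2 := mul_one a2
        have e1 : a2 * (n + c) = a2 * (n + c + 1) - a2 := by ring
        have e2 : a2 ^ 2 * (n + c) = a2 ^ 2 * (n + c + 1) - a2 ^ 2 := by ring
        rw [e1, e2]
        nlinarith [sq_nonneg a2]
      have ih' := ih L' hL'nn harith1
      -- measurability and bounds for the partial sum
      have hU : Measurable (fun ω => ∑ i ∈ s, Z i ω) :=
        Finset.measurable_sum s (fun i _ => hm i)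
      have hUb : ∀ ω, ‖∑ i ∈ s, Z i ω‖ ≤ c * M := by
        intro ω
        calc ‖∑ i ∈ s, Z i ω‖ ≤ ∑ i ∈ s, ‖Z i ω‖ := norm_sum_le _ _
          _ ≤ s.card • M := Finset.sum_le_card_nsmul s _ M (fun i _ => hb i ω)
          _ = c * M := by rw [nsmul_eq_mul, hc]
      have hIndepUV : IndepFun (fun ω => ∑ i ∈ s, Z i ω) (Z a) ℙ := by
        have h := hind.indepFun_finset_sum_of_notMem hm ha
        have heq : (∑ j ∈ s, Z j) = fun ω => ∑ j ∈ s, Z j ω := by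
          funext ω; exact Finset.sum_apply ω s Z
        rwa [heq] at h
      have hstep := step_lemma L M (c * M) hL hM (by positivity)
        hU (hm a) hIndepUV hUb (hb a) (h0 a)
      have hsum : ∀ ω, ∑ i ∈ insert a s, Z i ω = (∑ i ∈ s, Z i ω) + Z a ω := by
        intro ω; rw [Finset.sum_insert ha]; exact add_comm _ _
      calc ∫ ω, exp (L * ‖∑ i ∈ insert a s, Z i ω‖ ^ 2)
          = ∫ ω, exp (L * ‖(∑ i ∈ s, Z i ω) + Z a ω‖ ^ 2) := by
            congr 1; funext ω; rw [hsum ω]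
        _ ≤ exp (L * M ^ 2) * ∫ ω, exp (L' * ‖∑ i ∈ s, Z i ω‖ ^ 2) := hstep
        _ ≤ exp (L * M ^ 2) * exp (2 * L' * c * M ^ 2) := by
            exact mul_le_mul_of_nonneg_left ih' (Real.exp_pos _).le
        _ ≤ exp (2 * L * ((insert a s).card : ℝ) * M ^ 2) := by
            rw [← Real.exp_add, Real.exp_le_exp, hcard]
            have h5 : a2 * (2 * c) ≤ a2 * (n + c + 1) :=
              mul_le_mul_of_nonneg_left (by linarith) ha2nn
            have h6 : 2 * a2 * c ≤ 1 := by
              calc 2 * a2 * c = a2 * (2 * c) := by ring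
                _ ≤ a2 * (n + c + 1) := h5
                _ ≤ 1 := hq
            have h7 := mul_le_mul_of_nonneg_left h6 (mul_nonneg hL (sq_nonneg M))
            rw [ha2] at h7
            rw [hL']
            nlinarith [h7]

lemma tail_bound (Z : ι → Ω → E) (M : ℝ) (hM : 0 < M)
    (hind : iIndepFun Z ℙ)
    (hm : ∀ i, Measurable (Z i)) (hb : ∀ i ω, ‖Z i ω‖ ≤ M)
    (h0 : ∀ i, ∫ ω, Z i ω = 0) (t : ℝ) (ht : 0 ≤ t) (hcard : 0 < Fintype.card ι) :
    ℙ {ω | t ≤ ‖∑ i, Z i ω‖}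
      ≤ ENNReal.ofReal (exp (1/2) * exp (-t ^ 2 / (4 * (Fintype.card ι : ℝ) * M ^ 2))) := by
  set n : ℝ := (Fintype.card ι : ℝ) with hn
  have hn0 : 0 < n := by rw [hn]; exact_mod_cast hcard
  set L : ℝ := (4 * n * M ^ 2)⁻¹ with hL
  have hL0 : 0 < L := by rw [hL]; positivity
  have hcond : L * (2 * M ^ 2 * (n + ((Finset.univ : Finset ι).card : ℝ))) = 1 := by
    rw [Finset.card_univ, hL, ← hn]
    field_simp
    ring
  have hcore := core_mgf Z M hM hind hm hb h0 Finset.univ L hL0.le hcond.le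
  set X : Ω → ℝ := fun ω => ‖∑ i, Z i ω‖ ^ 2 with hX
  have hXm : Measurable X := ((Finset.measurable_sum Finset.univ (fun i _ => hm i)).norm.pow_const 2)
  have hXb : ∀ ω, X ω ≤ (n * M) ^ 2 := by
    intro ω
    have h1 : ‖∑ i, Z i ω‖ ≤ n * M := by
      calc ‖∑ i, Z i ω‖ ≤ ∑ i, ‖Z i ω‖ := norm_sum_le _ _
        _ ≤ (Finset.univ : Finset ι).card • M :=
            Finset.sum_le_card_nsmul _ _ M (fun i _ => hb i ω)
        _ = n * M := by rw [nsmul_eq_mul, Finset.card_univ, ← hn]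
    show ‖∑ i, Z i ω‖ ^ 2 ≤ (n * M) ^ 2
    exact pow_le_pow_left₀ (norm_nonneg _) h1 2
  have hXint : Integrable (fun ω => exp (L * X ω)) ℙ := by
    refine integrable_of_bound ?_ (exp (L * (n * M) ^ 2)) ?_
    · exact ((hXm.const_mul L).exp).aestronglyMeasurable
    · intro ω
      rw [Real.norm_eq_abs, abs_of_pos (Real.exp_pos _)]
      exact Real.exp_le_exp.mpr (mul_le_mul_of_nonneg_left (hXb ω) hL0.le)
  have hmgf : mgf X ℙ L ≤ exp (1/2) := by
    have hhalf : 2 * L * ((Finset.univ : Finset ι).card : ℝ) * M ^ 2 = 1/2 := by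
      rw [Finset.card_univ, ← hn, hL]
      field_simp
      ring
    calc mgf X ℙ L = ∫ ω, exp (L * X ω) := rfl
      _ ≤ exp (2 * L * ((Finset.univ : Finset ι).card : ℝ) * M ^ 2) := hcore
      _ = exp (1/2) := by rw [hhalf]
  have hmarkov := measure_ge_le_exp_mul_mgf (X := X) (μ := ℙ) (t := L) (t ^ 2) hL0.le hXint
  have hsub : {ω | t ≤ ‖∑ i, Z i ω‖} ⊆ {ω | t ^ 2 ≤ X ω} := by
    intro ω hω
    exact pow_le_pow_left₀ ht hω 2
  calc ℙ {ω | t ≤ ‖∑ i, Z i ω‖} ≤ ℙ {ω | t ^ 2 ≤ X ω} := measure_mono hsub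
    _ = ENNReal.ofReal ((ℙ {ω | t ^ 2 ≤ X ω}).toReal) :=
        (ENNReal.ofReal_toReal (measure_ne_top _ _)).symm
    _ ≤ ENNReal.ofReal (exp (-L * t ^ 2) * exp (1/2)) := by
        apply ENNReal.ofReal_le_ofReal
        exact hmarkov.trans (mul_le_mul_of_nonneg_left hmgf (Real.exp_pos _).le)
    _ = ENNReal.ofReal (exp (1/2) * exp (-t ^ 2 / (4 * n * M ^ 2))) := by
        rw [mul_comm]
        congr 2
        rw [hL]
        rw [neg_div, div_eq_mul_inv]
        ring

lemma iIndepFun_precomp {Ω' X ι₁ ι₂ : Type*} [MeasurableSpace Ω'] {μ : Measure Ω'}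
    [mX : MeasurableSpace X] {f : ι₁ → Ω' → X} (u : ι₂ → ι₁) (hu : Function.Injective u)
    (h : iIndepFun f μ) :
    iIndepFun (fun j => f (u j)) μ := by
  classical
  rw [iIndepFun_iff_measure_inter_preimage_eq_mul] at h ⊢
  intro S sets hsets
  have key := h (S.map ⟨u, hu⟩)
    (sets := Function.extend u sets (fun _ => Set.univ))
    (fun i hi => by
      simp only [Finset.mem_map, Function.Embedding.coeFn_mk] at hi
      obtain ⟨j, hj, rfl⟩ := hi
      rw [hu.extend_apply]
      exact hsets j hj)
  convert key using 1
  · congr 1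
    ext x
    simp only [Set.mem_iInter, Finset.mem_map, Function.Embedding.coeFn_mk]
    constructor
    · rintro hx i ⟨j, hj, rfl⟩
      rw [hu.extend_apply]
      exact hx j hj
    · intro hx j hj
      have hx' := hx (u j) ⟨j, hj, rfl⟩
      rwa [hu.extend_apply] at hx'
  · rw [Finset.prod_map]
    apply Finset.prod_congr rfl
    intro j _
    simp only [Function.Embedding.coeFn_mk]
    rw [hu.extend_apply]

lemma event_split {F : Type*} [NormedAddCommGroup F] [InnerProductSpace ℝ F]
    (B ε : ℝ) (hB : 0 < B) (hε : 0 < ε) (hεB : ε ≤ 6 * B)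
    (a₁ a₂ m₁ m₂ : F) (c₁ c₂ d₁ d₂ : ℝ)
    (hm₁ : ‖m₁‖ ≤ Real.sqrt B) (hm₂ : ‖m₂‖ ≤ Real.sqrt B)
    (h : ε < |‖a₁ - a₂‖ ^ 2 + c₁ + c₂ - (‖m₁ - m₂‖ ^ 2 + d₁ + d₂)|) :
    ε / (30 * Real.sqrt B) ≤ ‖a₁ - m₁‖ ∨ ε / (30 * Real.sqrt B) ≤ ‖a₂ - m₂‖
      ∨ ε / 3 ≤ |c₁ - d₁| ∨ ε / 3 ≤ |c₂ - d₂| := by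
  by_contra hcon
  push_neg at hcon
  obtain ⟨h1, h2, h3, h4⟩ := hcon
  set sB := Real.sqrt B with hsBdef
  have hsB : 0 < sB := Real.sqrt_pos.mpr hB
  have hsB2 : sB ^ 2 = B := Real.sq_sqrt hB.le
  set r := ‖a₁ - m₁‖ + ‖a₂ - m₂‖ with hr
  have hr0 : 0 ≤ r := by positivity
  have hrs : r < ε / (15 * sB) := by
    have he : ε / (30 * sB) + ε / (30 * sB) = ε / (15 * sB) := by
      field_simp; ring
    rw [hr]; linarith
  have hdle : ‖(a₁ - a₂) - (m₁ - m₂)‖ ≤ r := by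
    have he : a₁ - a₂ - (m₁ - m₂) = (a₁ - m₁) - (a₂ - m₂) := by abel
    rw [he, hr]; exact norm_sub_le _ _
  have hm : ‖m₁ - m₂‖ ≤ 2 * sB := (norm_sub_le _ _).trans (by linarith)
  have ha : ‖a₁ - a₂‖ ≤ 2 * sB + r := by
    have he : a₁ - a₂ = (m₁ - m₂) + ((a₁ - a₂) - (m₁ - m₂)) := by abel
    calc ‖a₁ - a₂‖ = ‖(m₁ - m₂) + ((a₁ - a₂) - (m₁ - m₂))‖ := by rw [← he]
      _ ≤ ‖m₁ - m₂‖ + ‖(a₁ - a₂) - (m₁ - m₂)‖ := norm_add_le _ _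
      _ ≤ 2 * sB + r := add_le_add hm hdle
  have hT1 : |‖a₁ - a₂‖ ^ 2 - ‖m₁ - m₂‖ ^ 2| ≤ (4 * sB + r) * r := by
    have he : ‖a₁ - a₂‖ ^ 2 - ‖m₁ - m₂‖ ^ 2
        = (‖a₁ - a₂‖ - ‖m₁ - m₂‖) * (‖a₁ - a₂‖ + ‖m₁ - m₂‖) := by ring
    rw [he, abs_mul]
    have hub : |‖a₁ - a₂‖ - ‖m₁ - m₂‖| ≤ r := (abs_norm_sub_norm_le _ _).trans hdle
    have hplus : |‖a₁ - a₂‖ + ‖m₁ - m₂‖| = ‖a₁ - a₂‖ + ‖m₁ - m₂‖ :=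
      abs_of_nonneg (by positivity)
    rw [hplus, mul_comm]
    exact mul_le_mul (by linarith) hub (abs_nonneg _) (by positivity)
  have htot : |‖a₁ - a₂‖ ^ 2 + c₁ + c₂ - (‖m₁ - m₂‖ ^ 2 + d₁ + d₂)|
      ≤ |‖a₁ - a₂‖ ^ 2 - ‖m₁ - m₂‖ ^ 2| + |c₁ - d₁| + |c₂ - d₂| := by
    have he : ‖a₁ - a₂‖ ^ 2 + c₁ + c₂ - (‖m₁ - m₂‖ ^ 2 + d₁ + d₂)
        = (‖a₁ - a₂‖ ^ 2 - ‖m₁ - m₂‖ ^ 2) + (c₁ - d₁) + (c₂ - d₂) := by ring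
    rw [he]
    calc |(‖a₁ - a₂‖ ^ 2 - ‖m₁ - m₂‖ ^ 2) + (c₁ - d₁) + (c₂ - d₂)|
        ≤ |(‖a₁ - a₂‖ ^ 2 - ‖m₁ - m₂‖ ^ 2) + (c₁ - d₁)| + |c₂ - d₂| := abs_add_le _ _
      _ ≤ |‖a₁ - a₂‖ ^ 2 - ‖m₁ - m₂‖ ^ 2| + |c₁ - d₁| + |c₂ - d₂| := by
          have := abs_add_le (‖a₁ - a₂‖ ^ 2 - ‖m₁ - m₂‖ ^ 2) (c₁ - d₁)
          linarith
  have hsle : ε / (15 * sB) ≤ (2/5) * sB := by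
    rw [div_le_iff₀ (by positivity)]
    nlinarith [hsB2]
  have hT1b : (4 * sB + r) * r ≤ (22/75) * ε := by
    have hstep : (4 * sB + r) * r ≤ (4 * sB + (2/5) * sB) * (ε / (15 * sB)) := by
      apply mul_le_mul (by linarith) (by linarith) hr0 (by positivity)
    have hcalc : (4 * sB + (2/5) * sB) * (ε / (15 * sB)) = (22/75) * ε := by
      field_simp; ring
    linarith
  clear_value sB r
  linarith

section MainAux
variable {n : ℕ} {F : Type*} [NormedAddCommGroup F] [NormedSpace ℝ F]

lemma avg_norm_le (hn : 0 < n) (v : Fin n → F) (C : ℝ) (hv : ∀ i, ‖v i‖ ≤ C) :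
    ‖(n : ℝ)⁻¹ • ∑ i, v i‖ ≤ C := by
  have hnR : (0:ℝ) < n := by exact_mod_cast hn
  rw [norm_smul, Real.norm_eq_abs, abs_of_nonneg (by positivity)]
  have hsum : ‖∑ i, v i‖ ≤ (n:ℝ) * C := by
    calc ‖∑ i, v i‖ ≤ ∑ i, ‖v i‖ := norm_sum_le _ _
      _ ≤ (Finset.univ : Finset (Fin n)).card • C :=
          Finset.sum_le_card_nsmul _ _ C (fun i _ => hv i)
      _ = (n:ℝ) * C := by rw [nsmul_eq_mul, Finset.card_univ, Fintype.card_fin]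
  calc (n:ℝ)⁻¹ * ‖∑ i, v i‖ ≤ (n:ℝ)⁻¹ * ((n:ℝ) * C) := by
        exact mul_le_mul_of_nonneg_left hsum (by positivity)
    _ = C := by field_simp

lemma avg_sub_eq (hn : 0 < n) (v : Fin n → F) (m : F) :
    (n : ℝ)⁻¹ • ∑ i, v i - m = (n : ℝ)⁻¹ • ∑ i, (v i - m) := by
  have hnR : (0:ℝ) < n := by exact_mod_cast hn
  rw [Finset.sum_sub_distrib, Finset.sum_const, Finset.card_univ, Fintype.card_fin, smul_sub]
  congr 1
  rw [← Nat.cast_smul_eq_nsmul ℝ, inv_smul_smul₀ hnR.ne']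

lemma avg_sub_eq' (hn : 0 < n) (v : Fin n → ℝ) (m : ℝ) :
    (n : ℝ)⁻¹ * ∑ i, v i - m = (n : ℝ)⁻¹ * ∑ i, (v i - m) := by
  have h := avg_sub_eq hn v m
  simpa [smul_eq_mul] using h

lemma avg_bounds (hn : 0 < n) (v : Fin n → ℝ) (B : ℝ) (h0 : ∀ i, 0 ≤ v i)
    (hB : ∀ i, v i ≤ B) : 0 ≤ (n : ℝ)⁻¹ * ∑ i, v i ∧ (n : ℝ)⁻¹ * ∑ i, v i ≤ B := by
  have hnR : (0:ℝ) < n := by exact_mod_cast hn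
  constructor
  · exact mul_nonneg (by positivity) (Finset.sum_nonneg (fun i _ => h0 i))
  · have h := avg_norm_le hn v B (fun i => by
      rw [Real.norm_eq_abs, abs_of_nonneg (h0 i)]; exact hB i)
    rw [Real.norm_eq_abs] at h
    calc (n : ℝ)⁻¹ * ∑ i, v i ≤ |(n : ℝ)⁻¹ * ∑ i, v i| := le_abs_self _
      _ = |(n : ℝ)⁻¹ • ∑ i, v i| := by rw [smul_eq_mul]
      _ ≤ B := h

end MainAux

set_option maxHeartbeats 1000000

/-- Combined concentration: there are universal constants c₁, c₂ > 0 such that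
the empirical adjusted distance D̂ = ‖h̄(D̃₁)−h̄(D̃₂)‖² + γ̄(D̃₁) + γ̄(D̃₂)
concentrates around D(P₁,P₂) = ‖E_{P₁}h − E_{P₂}h‖² + E_{P₁}γ + E_{P₂}γ. -/
theorem adjusted_distance_concentration :
    ∃ c₁ c₂ : ℝ, 0 < c₁ ∧ 0 < c₂ ∧
      ∀ (X : Type) (_ : MeasurableSpace X) (k n : ℕ), 0 < n →
      ∀ (h : X → EuclideanSpace ℝ (Fin k)), Measurable h →
      ∀ (γ : X → ℝ), Measurable γ →
      ∀ B : ℝ, 0 < B → (∀ x, ‖h x‖ ^ 2 ≤ B) → (∀ x, 0 ≤ γ x) → (∀ x, γ x ≤ B) →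
      ∀ (Ω : Type) (_ : MeasureSpace Ω), IsProbabilityMeasure (ℙ : Measure Ω) →
      ∀ (P₁ P₂ : Measure X), IsProbabilityMeasure P₁ → IsProbabilityMeasure P₂ →
      ∀ (Y : Fin n ⊕ Fin n → Ω → X), (∀ i, Measurable (Y i)) →
      iIndepFun Y ℙ →
      (∀ i : Fin n, Measure.map (Y (Sum.inl i)) ℙ = P₁) →
      (∀ i : Fin n, Measure.map (Y (Sum.inr i)) ℙ = P₂) →
      ∀ ε : ℝ, 0 < ε →
      ℙ {ω | |(‖(n : ℝ)⁻¹ • ∑ i : Fin n, h (Y (Sum.inl i) ω)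
                - (n : ℝ)⁻¹ • ∑ i : Fin n, h (Y (Sum.inr i) ω)‖ ^ 2
              + (n : ℝ)⁻¹ * ∑ i : Fin n, γ (Y (Sum.inl i) ω)
              + (n : ℝ)⁻¹ * ∑ i : Fin n, γ (Y (Sum.inr i) ω))
            - (‖(∫ x, h x ∂P₁) - ∫ x, h x ∂P₂‖ ^ 2
              + (∫ x, γ x ∂P₁) + ∫ x, γ x ∂P₂)| > ε}
        ≤ ENNReal.ofReal (c₁ * Real.exp (-(c₂ * n * ε ^ 2) / B ^ 2)) := by
  refine ⟨4 * Real.exp (1/2), (14400 : ℝ)⁻¹, by positivity, by norm_num, ?_⟩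
  intro X mX k n hn h hh γ hγ B hB hhB hγ0 hγB Ω mΩ hprob P₁ P₂ hP₁ hP₂ Y hY hYindep h₁ h₂ ε hε
  haveI := hprob; haveI := hP₁; haveI := hP₂
  have hnR : (0:ℝ) < n := by exact_mod_cast hn
  set sB : ℝ := Real.sqrt B with hsBdef
  have hsB : 0 < sB := Real.sqrt_pos.mpr hB
  have hsB2 : sB ^ 2 = B := Real.sq_sqrt hB.le
  have hnorm : ∀ x, ‖h x‖ ≤ sB := by
    intro x
    rw [hsBdef, show ‖h x‖ = Real.sqrt (‖h x‖ ^ 2) from (Real.sqrt_sq (norm_nonneg _)).symm]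
    exact Real.sqrt_le_sqrt (hhB x)
  set μ₁ : EuclideanSpace ℝ (Fin k) := ∫ x, h x ∂P₁ with hμ₁def
  set μ₂ : EuclideanSpace ℝ (Fin k) := ∫ x, h x ∂P₂ with hμ₂def
  set g₁ : ℝ := ∫ x, γ x ∂P₁ with hg₁def
  set g₂ : ℝ := ∫ x, γ x ∂P₂ with hg₂def
  have hμn : ∀ (P : Measure X), IsProbabilityMeasure P → ‖∫ x, h x ∂P‖ ≤ sB := by
    intro P hP
    have := norm_integral_le_of_norm_le_const (μ := P) (C := sB)
      (Filter.Eventually.of_forall hnorm)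
    simpa [measure_univ] using this
  have hμ₁n : ‖μ₁‖ ≤ sB := hμn P₁ hP₁
  have hμ₂n : ‖μ₂‖ ≤ sB := hμn P₂ hP₂
  have hγint : ∀ (P : Measure X), IsProbabilityMeasure P → Integrable γ P := by
    intro P hP
    exact (integrable_const B).mono' hγ.aestronglyMeasurable
      (Filter.Eventually.of_forall (fun x => by
        rw [Real.norm_eq_abs, abs_of_nonneg (hγ0 x)]; exact hγB x))
  have hgb : ∀ (P : Measure X), IsProbabilityMeasure P →
      0 ≤ ∫ x, γ x ∂P ∧ ∫ x, γ x ∂P ≤ B := by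
    intro P hP
    refine ⟨integral_nonneg hγ0, ?_⟩
    calc ∫ x, γ x ∂P ≤ ∫ _x, B ∂P := integral_mono (hγint P hP) (integrable_const B) hγB
      _ = B := by simp [measure_univ]
  have hg₁b := hgb P₁ hP₁
  have hg₂b := hgb P₂ hP₂
  -- pointwise bounds on empirical quantities
  have hA1 : ∀ ω, ‖(n : ℝ)⁻¹ • ∑ i : Fin n, h (Y (Sum.inl i) ω)‖ ≤ sB :=
    fun ω => avg_norm_le hn _ sB (fun i => hnorm _)
  have hA2 : ∀ ω, ‖(n : ℝ)⁻¹ • ∑ i : Fin n, h (Y (Sum.inr i) ω)‖ ≤ sB :=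
    fun ω => avg_norm_le hn _ sB (fun i => hnorm _)
  have hG1 : ∀ ω, 0 ≤ (n : ℝ)⁻¹ * ∑ i : Fin n, γ (Y (Sum.inl i) ω)
      ∧ (n : ℝ)⁻¹ * ∑ i : Fin n, γ (Y (Sum.inl i) ω) ≤ B :=
    fun ω => avg_bounds hn _ B (fun i => hγ0 _) (fun i => hγB _)
  have hG2 : ∀ ω, 0 ≤ (n : ℝ)⁻¹ * ∑ i : Fin n, γ (Y (Sum.inr i) ω)
      ∧ (n : ℝ)⁻¹ * ∑ i : Fin n, γ (Y (Sum.inr i) ω) ≤ B :=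
    fun ω => avg_bounds hn _ B (fun i => hγ0 _) (fun i => hγB _)
  rcases le_or_gt ε (6 * B) with hεB | hεB
  swap
  · -- ε > 6B : the event is empty
    have hempty : {ω : Ω | |(‖(n : ℝ)⁻¹ • ∑ i : Fin n, h (Y (Sum.inl i) ω)
                - (n : ℝ)⁻¹ • ∑ i : Fin n, h (Y (Sum.inr i) ω)‖ ^ 2
              + (n : ℝ)⁻¹ * ∑ i : Fin n, γ (Y (Sum.inl i) ω)
              + (n : ℝ)⁻¹ * ∑ i : Fin n, γ (Y (Sum.inr i) ω))
            - (‖μ₁ - μ₂‖ ^ 2 + g₁ + g₂)| > ε} = ∅ := by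
      ext ω
      simp only [Set.mem_setOf_eq, Set.mem_empty_iff_false, iff_false, not_lt]
      have hd1 : ‖(n : ℝ)⁻¹ • ∑ i : Fin n, h (Y (Sum.inl i) ω)
          - (n : ℝ)⁻¹ • ∑ i : Fin n, h (Y (Sum.inr i) ω)‖ ^ 2 ≤ 4 * B := by
        have hns := (norm_sub_le _ _).trans (add_le_add (hA1 ω) (hA2 ω))
        calc ‖_ - _‖ ^ 2 ≤ (sB + sB) ^ 2 := pow_le_pow_left₀ (norm_nonneg _) hns 2
          _ = 4 * B := by rw [← hsB2]; ring
      have hd2 : ‖μ₁ - μ₂‖ ^ 2 ≤ 4 * B := by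
        have hns := (norm_sub_le _ _).trans (add_le_add hμ₁n hμ₂n)
        calc ‖μ₁ - μ₂‖ ^ 2 ≤ (sB + sB) ^ 2 := pow_le_pow_left₀ (norm_nonneg _) hns 2
          _ = 4 * B := by rw [← hsB2]; ring
      have hq1 := hG1 ω
      have hq2 := hG2 ω
      have hb1 : (0:ℝ) ≤ ‖μ₁ - μ₂‖ ^ 2 := by positivity
      have hb2 : (0:ℝ) ≤ ‖(n : ℝ)⁻¹ • ∑ i : Fin n, h (Y (Sum.inl i) ω)
          - (n : ℝ)⁻¹ • ∑ i : Fin n, h (Y (Sum.inr i) ω)‖ ^ 2 := by positivity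
      rw [abs_sub_le_iff]
      constructor <;> [skip; skip] <;>
        · have := hg₁b; have := hg₂b; linarith [hq1.1, hq1.2, hq2.1, hq2.2,
            hg₁b.1, hg₁b.2, hg₂b.1, hg₂b.2]
    rw [hempty]
    simp
  · -- main case : ε ≤ 6B
    have hYinl : iIndepFun (fun i : Fin n => Y (Sum.inl i)) ℙ :=
      iIndepFun_precomp Sum.inl Sum.inl_injective hYindep
    have hYinr : iIndepFun (fun i : Fin n => Y (Sum.inr i)) ℙ :=
      iIndepFun_precomp Sum.inr Sum.inr_injective hYindep
    set Z₁ : Fin n → Ω → EuclideanSpace ℝ (Fin k) :=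
      fun i ω => h (Y (Sum.inl i) ω) - μ₁ with hZ₁def
    set Z₂ : Fin n → Ω → EuclideanSpace ℝ (Fin k) :=
      fun i ω => h (Y (Sum.inr i) ω) - μ₂ with hZ₂def
    set W₁ : Fin n → Ω → ℝ := fun i ω => γ (Y (Sum.inl i) ω) - g₁ with hW₁def
    set W₂ : Fin n → Ω → ℝ := fun i ω => γ (Y (Sum.inr i) ω) - g₂ with hW₂def
    have hZ₁indep : iIndepFun Z₁ ℙ :=
      hYinl.comp (fun _ => fun x => h x - μ₁) (fun _ => hh.sub measurable_const)
    have hZ₂indep : iIndepFun Z₂ ℙ :=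
      hYinr.comp (fun _ => fun x => h x - μ₂) (fun _ => hh.sub measurable_const)
    have hW₁indep : iIndepFun W₁ ℙ :=
      hYinl.comp (fun _ => fun x => γ x - g₁) (fun _ => hγ.sub measurable_const)
    have hW₂indep : iIndepFun W₂ ℙ :=
      hYinr.comp (fun _ => fun x => γ x - g₂) (fun _ => hγ.sub measurable_const)
    have hZ₁m : ∀ i, Measurable (Z₁ i) := fun i => (hh.comp (hY _)).sub measurable_const
    have hZ₂m : ∀ i, Measurable (Z₂ i) := fun i => (hh.comp (hY _)).sub measurable_const
    have hW₁m : ∀ i, Measurable (W₁ i) := fun i => (hγ.comp (hY _)).sub measurable_const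
    have hW₂m : ∀ i, Measurable (W₂ i) := fun i => (hγ.comp (hY _)).sub measurable_const
    have hZ₁b : ∀ i ω, ‖Z₁ i ω‖ ≤ 2 * sB := fun i ω =>
      (norm_sub_le _ _).trans (by have := hnorm (Y (Sum.inl i) ω); linarith)
    have hZ₂b : ∀ i ω, ‖Z₂ i ω‖ ≤ 2 * sB := fun i ω =>
      (norm_sub_le _ _).trans (by have := hnorm (Y (Sum.inr i) ω); linarith)
    have hW₁b : ∀ i ω, ‖W₁ i ω‖ ≤ B := by
      intro i ω
      show |γ (Y (Sum.inl i) ω) - g₁| ≤ B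
      exact abs_le.mpr ⟨by have := hγ0 (Y (Sum.inl i) ω); linarith [hg₁b.2],
        by have := hγB (Y (Sum.inl i) ω); linarith [hg₁b.1]⟩
    have hW₂b : ∀ i ω, ‖W₂ i ω‖ ≤ B := by
      intro i ω
      show |γ (Y (Sum.inr i) ω) - g₂| ≤ B
      exact abs_le.mpr ⟨by have := hγ0 (Y (Sum.inr i) ω); linarith [hg₂b.2],
        by have := hγB (Y (Sum.inr i) ω); linarith [hg₂b.1]⟩
    -- mean zero
    have hmeanh : ∀ (j : Fin n ⊕ Fin n) (P : Measure X), Measure.map (Y j) ℙ = P →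
        ∫ ω, h (Y j ω) = ∫ x, h x ∂P := by
      intro j P hmap
      rw [← hmap, integral_map (hY j).aemeasurable hh.aestronglyMeasurable]
    have hmeanγ : ∀ (j : Fin n ⊕ Fin n) (P : Measure X), Measure.map (Y j) ℙ = P →
        ∫ ω, γ (Y j ω) = ∫ x, γ x ∂P := by
      intro j P hmap
      rw [← hmap, integral_map (hY j).aemeasurable hγ.aestronglyMeasurable]
    have hinth : ∀ (j : Fin n ⊕ Fin n), Integrable (fun ω => h (Y j ω)) ℙ := fun j =>
      (integrable_const sB).mono' ((hh.comp (hY j)).aestronglyMeasurable)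
        (Filter.Eventually.of_forall (fun ω => hnorm _))
    have hintγ : ∀ (j : Fin n ⊕ Fin n), Integrable (fun ω => γ (Y j ω)) ℙ := fun j =>
      (integrable_const B).mono' ((hγ.comp (hY j)).aestronglyMeasurable)
        (Filter.Eventually.of_forall (fun ω => by
          rw [Real.norm_eq_abs, abs_of_nonneg (hγ0 _)]; exact hγB _))
    have hZ₁0 : ∀ i, ∫ ω, Z₁ i ω = 0 := by
      intro i
      rw [hZ₁def]
      rw [integral_sub (hinth (Sum.inl i)) (integrable_const μ₁), integral_const,
        probReal_univ, one_smul, hmeanh (Sum.inl i) P₁ (h₁ i),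
        ← hμ₁def, sub_self]
    have hZ₂0 : ∀ i, ∫ ω, Z₂ i ω = 0 := by
      intro i
      rw [hZ₂def]
      rw [integral_sub (hinth (Sum.inr i)) (integrable_const μ₂), integral_const,
        probReal_univ, one_smul, hmeanh (Sum.inr i) P₂ (h₂ i),
        ← hμ₂def, sub_self]
    have hW₁0 : ∀ i, ∫ ω, W₁ i ω = 0 := by
      intro i
      rw [hW₁def]
      rw [integral_sub (hintγ (Sum.inl i)) (integrable_const g₁), integral_const,
        probReal_univ, smul_eq_mul, one_mul,
        hmeanγ (Sum.inl i) P₁ (h₁ i), ← hg₁def, sub_self]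
    have hW₂0 : ∀ i, ∫ ω, W₂ i ω = 0 := by
      intro i
      rw [hW₂def]
      rw [integral_sub (hintγ (Sum.inr i)) (integrable_const g₂), integral_const,
        probReal_univ, smul_eq_mul, one_mul,
        hmeanγ (Sum.inr i) P₂ (h₂ i), ← hg₂def, sub_self]
    -- tail bounds
    have hcard : 0 < Fintype.card (Fin n) := by simpa using hn
    have htail1 := tail_bound Z₁ (2 * sB) (by positivity) hZ₁indep hZ₁m hZ₁b hZ₁0
      ((n : ℝ) * (ε / (30 * sB))) (by positivity) hcard
    have htail2 := tail_bound Z₂ (2 * sB) (by positivity) hZ₂indep hZ₂m hZ₂b hZ₂0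
      ((n : ℝ) * (ε / (30 * sB))) (by positivity) hcard
    have htail3 := tail_bound W₁ B hB hW₁indep hW₁m hW₁b hW₁0
      ((n : ℝ) * (ε / 3)) (by positivity) hcard
    have htail4 := tail_bound W₂ B hB hW₂indep hW₂m hW₂b hW₂0
      ((n : ℝ) * (ε / 3)) (by positivity) hcard
    rw [show (Fintype.card (Fin n) : ℝ) = (n : ℝ) from by simp] at htail1 htail2 htail3 htail4
    set S₁ : Set Ω := {ω | (n : ℝ) * (ε / (30 * sB)) ≤ ‖∑ i, Z₁ i ω‖} with hS₁def
    set S₂ : Set Ω := {ω | (n : ℝ) * (ε / (30 * sB)) ≤ ‖∑ i, Z₂ i ω‖} with hS₂def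
    set S₃ : Set Ω := {ω | (n : ℝ) * (ε / 3) ≤ ‖∑ i, W₁ i ω‖} with hS₃def
    set S₄ : Set Ω := {ω | (n : ℝ) * (ε / 3) ≤ ‖∑ i, W₂ i ω‖} with hS₄def
    set q : ℝ := Real.exp (1/2) * Real.exp (-((14400:ℝ)⁻¹ * (n:ℝ) * ε ^ 2) / B ^ 2) with hqdef
    have hq0 : 0 ≤ q := by positivity
    have he1 : -((n : ℝ) * (ε / (30 * sB))) ^ 2 / (4 * (n:ℝ) * (2 * sB) ^ 2)
        = -((14400:ℝ)⁻¹ * (n:ℝ) * ε ^ 2) / B ^ 2 := by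
      rw [← hsB2]
      field_simp
      ring
    have hq1 : ℙ S₁ ≤ ENNReal.ofReal q := by
      calc ℙ _ ≤ _ := htail1
        _ = ENNReal.ofReal q := by rw [hqdef, he1]
    have hq2 : ℙ S₂ ≤ ENNReal.ofReal q := by
      calc ℙ _ ≤ _ := htail2
        _ = ENNReal.ofReal q := by rw [hqdef, he1]
    have hmono : Real.exp (1/2) * Real.exp (-((n : ℝ) * (ε / 3)) ^ 2 / (4 * (n:ℝ) * B ^ 2))
        ≤ q := by
      rw [hqdef]
      apply mul_le_mul_of_nonneg_left _ (Real.exp_pos _).le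
      rw [Real.exp_le_exp]
      have heq : ((n : ℝ) * (ε / 3)) ^ 2 / (4 * (n:ℝ) * B ^ 2)
          = (n:ℝ) * ε ^ 2 / (36 * B ^ 2) := by
        field_simp
        ring
      rw [neg_div, neg_div, neg_le_neg_iff, heq]
      rw [div_le_div_iff₀ (by positivity) (by positivity)]
      nlinarith [mul_pos (mul_pos hnR (pow_pos hε 2)) (pow_pos hB 2)]
    have hq3 : ℙ S₃ ≤ ENNReal.ofReal q :=
      htail3.trans (ENNReal.ofReal_le_ofReal hmono)
    have hq4 : ℙ S₄ ≤ ENNReal.ofReal q :=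
      htail4.trans (ENNReal.ofReal_le_ofReal hmono)
    -- event inclusion
    have hscale : ∀ c y : ℝ, c ≤ (n : ℝ)⁻¹ * y → (n : ℝ) * c ≤ y := by
      intro c y hcy
      have := mul_le_mul_of_nonneg_left hcy hnR.le
      rwa [mul_inv_cancel_left₀ hnR.ne'] at this
    have hsubset : {ω : Ω | |(‖(n : ℝ)⁻¹ • ∑ i : Fin n, h (Y (Sum.inl i) ω)
                - (n : ℝ)⁻¹ • ∑ i : Fin n, h (Y (Sum.inr i) ω)‖ ^ 2
              + (n : ℝ)⁻¹ * ∑ i : Fin n, γ (Y (Sum.inl i) ω)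
              + (n : ℝ)⁻¹ * ∑ i : Fin n, γ (Y (Sum.inr i) ω))
            - (‖μ₁ - μ₂‖ ^ 2 + g₁ + g₂)| > ε}
        ⊆ S₁ ∪ (S₂ ∪ (S₃ ∪ S₄)) := by
      intro ω hω
      simp only [Set.mem_setOf_eq] at hω
      have hsplit := event_split B ε hB hε hεB
        ((n : ℝ)⁻¹ • ∑ i : Fin n, h (Y (Sum.inl i) ω))
        ((n : ℝ)⁻¹ • ∑ i : Fin n, h (Y (Sum.inr i) ω)) μ₁ μ₂
        ((n : ℝ)⁻¹ * ∑ i : Fin n, γ (Y (Sum.inl i) ω))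
        ((n : ℝ)⁻¹ * ∑ i : Fin n, γ (Y (Sum.inr i) ω)) g₁ g₂
        hμ₁n hμ₂n hω
      rcases hsplit with h' | h' | h' | h'
      · left
        show ω ∈ S₁
        rw [hS₁def, Set.mem_setOf_eq]
        rw [avg_sub_eq hn _ μ₁, norm_smul, Real.norm_eq_abs,
          abs_of_nonneg (by positivity : (0:ℝ) ≤ (n:ℝ)⁻¹)] at h'
        exact hscale _ _ h'
      · right; left
        show ω ∈ S₂
        rw [hS₂def, Set.mem_setOf_eq]
        rw [avg_sub_eq hn _ μ₂, norm_smul, Real.norm_eq_abs,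
          abs_of_nonneg (by positivity : (0:ℝ) ≤ (n:ℝ)⁻¹)] at h'
        exact hscale _ _ h'
      · right; right; left
        show ω ∈ S₃
        rw [hS₃def, Set.mem_setOf_eq]
        rw [show ((n : ℝ)⁻¹ * ∑ i : Fin n, γ (Y (Sum.inl i) ω)) - g₁
            = (n : ℝ)⁻¹ * ∑ i, W₁ i ω from avg_sub_eq' hn _ g₁,
          abs_mul, abs_of_nonneg (by positivity : (0:ℝ) ≤ (n:ℝ)⁻¹)] at h'
        rw [Real.norm_eq_abs]
        exact hscale _ _ h'
      · right; right; right
        show ω ∈ S₄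
        rw [hS₄def, Set.mem_setOf_eq]
        rw [show ((n : ℝ)⁻¹ * ∑ i : Fin n, γ (Y (Sum.inr i) ω)) - g₂
            = (n : ℝ)⁻¹ * ∑ i, W₂ i ω from avg_sub_eq' hn _ g₂,
          abs_mul, abs_of_nonneg (by positivity : (0:ℝ) ≤ (n:ℝ)⁻¹)] at h'
        rw [Real.norm_eq_abs]
        exact hscale _ _ h'
    -- combine
    calc ℙ {ω : Ω | |(‖(n : ℝ)⁻¹ • ∑ i : Fin n, h (Y (Sum.inl i) ω)
                - (n : ℝ)⁻¹ • ∑ i : Fin n, h (Y (Sum.inr i) ω)‖ ^ 2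
              + (n : ℝ)⁻¹ * ∑ i : Fin n, γ (Y (Sum.inl i) ω)
              + (n : ℝ)⁻¹ * ∑ i : Fin n, γ (Y (Sum.inr i) ω))
            - (‖μ₁ - μ₂‖ ^ 2 + g₁ + g₂)| > ε}
        ≤ ℙ (S₁ ∪ (S₂ ∪ (S₃ ∪ S₄))) := measure_mono hsubset
      _ ≤ ℙ S₁ + ℙ (S₂ ∪ (S₃ ∪ S₄)) := measure_union_le _ _
      _ ≤ ℙ S₁ + (ℙ S₂ + ℙ (S₃ ∪ S₄)) := by
          gcongr
          exact measure_union_le _ _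
      _ ≤ ℙ S₁ + (ℙ S₂ + (ℙ S₃ + ℙ S₄)) := by
          gcongr
          exact measure_union_le _ _
      _ ≤ ENNReal.ofReal q + (ENNReal.ofReal q + (ENNReal.ofReal q + ENNReal.ofReal q)) := by
          gcongr
      _ = ENNReal.ofReal (4 * Real.exp (1/2)
            * Real.exp (-((14400:ℝ)⁻¹ * (n:ℝ) * ε ^ 2) / B ^ 2)) := by
          rw [← ENNReal.ofReal_add hq0 hq0, ← ENNReal.ofReal_add hq0 (by positivity),
            ← ENNReal.ofReal_add hq0 (by positivity)]
          congr 1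
          rw [hqdef]
          ring
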